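/- The following two subsets of sl(3,C) × C (pairs (A, t) with A a traceless 3×3 complex matrix and t ∈ C) are distinct: V₁ = { (A,t) : det(A) = 0, det(A - t·I) = 0, a₁₁ = a₂₂ } and V₂ = { (A,t) : det(A) = 0, σ₂(A) + t² = 0, a₁₁ = a₂₂ }, where σ₂(A) is the sum of the principal 2×2 minors of A. Specifically, the pair (A, t) with A = E₁₂ + E₂₁ (ones in positions (1,2) and (2,1), zeros elsewhere) and t = 0 lies in V₁ but not in V₂. Hence the two homogenisations of the ideal of the regular fibre, obtained from the two generating sets {p, q, f_H} and {p, p - q, f_H}, define distinct projective varieties in P⁸. -/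
import Mathlib

open Matrix

/-- The sum of the three principal 2×2 minors of a 3×3 matrix. -/
def sigma2 (A : Matrix (Fin 3) (Fin 3) ℂ) : ℂ :=
  (A 0 0 * A 1 1 - A 0 1 * A 1 0) +
  (A 0 0 * A 2 2 - A 0 2 * A 2 0) +
  (A 1 1 * A 2 2 - A 1 2 * A 2 1)

/-- The vanishing locus in `sl(3,ℂ) × ℂ` of the homogenisation of the generating set
`{p, q, f_H}` of the ideal of the regular fibre. -/
def V₁ : Set (Matrix (Fin 3) (Fin 3) ℂ × ℂ) :=
  { P | P.1.trace = 0 ∧ P.1.det = 0 ∧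
        (P.1 - P.2 • (1 : Matrix (Fin 3) (Fin 3) ℂ)).det = 0 ∧ P.1 0 0 = P.1 1 1 }

/-- The vanishing locus in `sl(3,ℂ) × ℂ` of the homogenisation of the generating set
`{p, p - q, f_H}` of the same ideal. -/
def V₂ : Set (Matrix (Fin 3) (Fin 3) ℂ × ℂ) :=
  { P | P.1.trace = 0 ∧ P.1.det = 0 ∧
        sigma2 P.1 + P.2 ^ 2 = 0 ∧ P.1 0 0 = P.1 1 1 }

/-- The two homogenisations define distinct varieties: `V₁ ≠ V₂`; specifically the
pair `(E₁₂ + E₂₁, 0)` lies in `V₁` but not in `V₂`. -/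
theorem stmt_18 :
    V₁ ≠ V₂ ∧
    (!![(0 : ℂ), 1, 0; 1, 0, 0; 0, 0, 0], (0 : ℂ)) ∈ V₁ ∧
    (!![(0 : ℂ), 1, 0; 1, 0, 0; 0, 0, 0], (0 : ℂ)) ∉ V₂ := by
  have h1 : (!![(0 : ℂ), 1, 0; 1, 0, 0; 0, 0, 0], (0 : ℂ)) ∈ V₁ := by
    refine ⟨?_, ?_, ?_, ?_⟩ <;>
      simp [V₁, Matrix.trace_fin_three, Matrix.det_fin_three, Matrix.one_fin_three, Matrix.vecHead, Matrix.vecTail]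
  have h2 : (!![(0 : ℂ), 1, 0; 1, 0, 0; 0, 0, 0], (0 : ℂ)) ∉ V₂ := by
    intro h
    obtain ⟨-, -, hs, -⟩ := h
    simp [sigma2] at hs
  exact ⟨fun h => h2 (h ▸ h1), h1, h2⟩
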